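/- The following identity holds in the extended nonnegative reals: Σ_u deg(u) · q_fin(u) = Σ_v deg(v) · q_0(v) · Σ_{n≥0} p_{2n}(v, v), where both outer sums are over all vertices of G. -/

import Mathlib

open MeasureTheory
open scoped ENNReal Classical

namespace CollisionsStmt

variable {V : Type*}

/-- One-step transition probabilities of the simple random walk on `G`:
`p(u,v) = 1/deg u` if `v` is adjacent to `u`, and `0` otherwise. -/
noncomputable def step (G : SimpleGraph V) [G.LocallyFinite] (u v : V) : ℝ≥0∞ :=
  if G.Adj u v then ((G.degree u : ℝ≥0∞))⁻¹ else 0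

/-- The `n`-step transition probabilities of the simple random walk on `G`. -/
noncomputable def pn (G : SimpleGraph V) [G.LocallyFinite] : ℕ → V → V → ℝ≥0∞
  | 0, u, v => if u = v then 1 else 0
  | n + 1, u, v => ∑' w, step G u w * pn G n w v

/-- `μ` is the law (on path space, via the Ionescu–Tulcea trajectory construction) of
two independent walks with one-step transition probabilities `p`, started at `a` and `b`
respectively; equivalently, the Markov chain on `V × V` with kernel `p ⊗ p` started at `(a, b)`.
The law is characterized by being a probability measure with the prescribed
finite-dimensional (cylinder) distributions. -/
def IsPairWalkMeasure [MeasurableSpace V] (p : V → V → ℝ≥0∞) (a b : V)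
    (μ : Measure (ℕ → V × V)) : Prop :=
  IsProbabilityMeasure μ ∧
    ∀ (n : ℕ) (x : ℕ → V × V),
      μ {ω | ∀ i ≤ n, ω i = x i} =
        (if x 0 = (a, b) then (1 : ℝ≥0∞) else 0) *
          ∏ i ∈ Finset.range n, (p (x i).1 (x (i + 1)).1 * p (x i).2 (x (i + 1)).2)

/-- The event that the two walks do not collide at any time `n ≥ 1`. -/
def noCollision : Set (ℕ → V × V) := {ω | ∀ n ≥ 1, (ω n).1 ≠ (ω n).2}

/-- The event that the two walks have their last collision at the vertex `v`: for some
`n ≥ 0`, `X_n = Y_n = v` and `X_m ≠ Y_m` for all `m > n`. -/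
def lastCollisionAt (v : V) : Set (ℕ → V × V) :=
  {ω | ∃ n : ℕ, ω n = (v, v) ∧ ∀ m > n, (ω m).1 ≠ (ω m).2}

/-- The event that the two walks collide at only finitely many times. -/
def finCollisions : Set (ℕ → V × V) := {ω | {n : ℕ | (ω n).1 = (ω n).2}.Finite}

/-- The event that the two walks collide at infinitely many times. -/
def infCollisions : Set (ℕ → V × V) := {ω | {n : ℕ | (ω n).1 = (ω n).2}.Infinite}

/-- The event that the two walks never collide (including at time `0`). -/
def neverCollide : Set (ℕ → V × V) := {ω | ∀ n : ℕ, (ω n).1 ≠ (ω n).2}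

section PnLemmas

variable (G : SimpleGraph V) [G.LocallyFinite]

lemma pn_zero (u v : V) : pn G 0 u v = if u = v then 1 else 0 := rfl

lemma pn_succ (n : ℕ) (u v : V) : pn G (n + 1) u v = ∑' w, step G u w * pn G n w v := rfl

lemma tsum_step (hdeg : ∀ v : V, 0 < G.degree v) (u : V) : ∑' v, step G u v = 1 := by
  classical
  have h : ∀ v ∉ (G.neighborFinset u), step G u v = 0 := by
    intro v hv
    rw [SimpleGraph.mem_neighborFinset] at hv
    simp [step, hv]
  rw [tsum_eq_sum h]
  have h2 : ∀ v ∈ G.neighborFinset u, step G u v = ((G.degree u : ℝ≥0∞))⁻¹ := by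
    intro v hv
    rw [SimpleGraph.mem_neighborFinset] at hv
    simp [step, hv]
  rw [Finset.sum_congr rfl h2, Finset.sum_const, SimpleGraph.card_neighborFinset_eq_degree,
    nsmul_eq_mul]
  exact ENNReal.mul_inv_cancel (by exact_mod_cast (hdeg u).ne') (by simp)

lemma step_symm (hdeg : ∀ v : V, 0 < G.degree v) (u v : V) :
    (G.degree u : ℝ≥0∞) * step G u v = (G.degree v : ℝ≥0∞) * step G v u := by
  by_cases h : G.Adj u v
  · rw [step, step, if_pos h, if_pos h.symm,
      ENNReal.mul_inv_cancel (by exact_mod_cast (hdeg u).ne') (by simp),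
      ENNReal.mul_inv_cancel (by exact_mod_cast (hdeg v).ne') (by simp)]
  · rw [step, step, if_neg h, if_neg (fun hh => h hh.symm), mul_zero, mul_zero]

lemma tsum_pn (hdeg : ∀ v : V, 0 < G.degree v) (n : ℕ) (u : V) : ∑' v, pn G n u v = 1 := by
  induction n generalizing u with
  | zero =>
    rw [show (1 : ℝ≥0∞) = pn G 0 u u by simp [pn_zero]]
    exact tsum_eq_single u (fun b hb => by simp [pn_zero, (Ne.symm hb)])
  | succ n ih =>
    simp only [pn_succ]
    rw [ENNReal.tsum_comm]
    calc ∑' w, ∑' v, step G u w * pn G n w v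
        = ∑' w, step G u w * ∑' v, pn G n w v := by
          exact tsum_congr fun w => ENNReal.tsum_mul_left
      _ = ∑' w, step G u w := by
          refine tsum_congr fun w => by rw [ih w, mul_one]
      _ = 1 := tsum_step G hdeg u

lemma pn_le_one (hdeg : ∀ v : V, 0 < G.degree v) (n : ℕ) (u v : V) : pn G n u v ≤ 1 :=
  le_trans (ENNReal.le_tsum v) (tsum_pn G hdeg n u).le

lemma pn_one (u v : V) : pn G 1 u v = step G u v := by
  rw [pn_succ]
  rw [tsum_eq_single v (fun b hb => by simp [pn_zero, hb])]
  simp [pn_zero]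

lemma pn_add (m n : ℕ) (u v : V) :
    pn G (m + n) u v = ∑' w, pn G m u w * pn G n w v := by
  induction m generalizing u with
  | zero =>
    rw [Nat.zero_add]
    rw [tsum_eq_single u (fun b hb => by simp [pn_zero, Ne.symm hb])]
    simp [pn_zero]
  | succ m ih =>
    rw [show m + 1 + n = (m + n) + 1 by omega, pn_succ]
    calc ∑' w, step G u w * pn G (m + n) w v
        = ∑' w, step G u w * ∑' z, pn G m w z * pn G n z v := by
          exact tsum_congr fun w => by rw [ih w]
      _ = ∑' w, ∑' z, step G u w * (pn G m w z * pn G n z v) := by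
          exact tsum_congr fun w => ENNReal.tsum_mul_left.symm
      _ = ∑' z, ∑' w, step G u w * (pn G m w z * pn G n z v) := ENNReal.tsum_comm
      _ = ∑' z, (∑' w, step G u w * pn G m w z) * pn G n z v := by
          refine tsum_congr fun z => ?_
          rw [← ENNReal.tsum_mul_right]
          exact tsum_congr fun w => (mul_assoc _ _ _).symm
      _ = ∑' z, pn G (m + 1) u z * pn G n z v := by
          exact tsum_congr fun z => by rw [pn_succ]

lemma pn_succ' (n : ℕ) (u v : V) :
    pn G (n + 1) u v = ∑' w, pn G n u w * step G w v := by
  rw [pn_add G n 1 u v]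
  exact tsum_congr fun w => by rw [pn_one]

lemma pn_symm (hdeg : ∀ v : V, 0 < G.degree v) (n : ℕ) (u v : V) :
    (G.degree u : ℝ≥0∞) * pn G n u v = (G.degree v : ℝ≥0∞) * pn G n v u := by
  induction n generalizing u v with
  | zero =>
    by_cases h : u = v
    · subst h; rfl
    · simp [pn_zero, h, Ne.symm h]
  | succ n ih =>
    rw [pn_succ, pn_succ' G n v u]
    calc (G.degree u : ℝ≥0∞) * ∑' w, step G u w * pn G n w v
        = ∑' w, ((G.degree u : ℝ≥0∞) * step G u w) * pn G n w v := by
          rw [← ENNReal.tsum_mul_left]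
          exact tsum_congr fun w => (mul_assoc _ _ _).symm
      _ = ∑' w, ((G.degree w : ℝ≥0∞) * step G w u) * pn G n w v := by
          exact tsum_congr fun w => by rw [step_symm G hdeg u w]
      _ = ∑' w, step G w u * ((G.degree w : ℝ≥0∞) * pn G n w v) := by
          exact tsum_congr fun w => by ring
      _ = ∑' w, step G w u * ((G.degree v : ℝ≥0∞) * pn G n v w) := by
          exact tsum_congr fun w => by rw [ih w v]
      _ = (G.degree v : ℝ≥0∞) * ∑' w, pn G n v w * step G w u := by
          rw [← ENNReal.tsum_mul_left]; exact tsum_congr fun w => by ring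

end PnLemmas

section PathSums

variable (G : SimpleGraph V) [G.LocallyFinite]

/-- weight of a finite path -/
noncomputable def pwt {α : Type*} (f : α → α → ℝ≥0∞) {n : ℕ} (y : Fin (n + 1) → α) : ℝ≥0∞ :=
  ∏ i : Fin n, f (y i.castSucc) (y i.succ)

lemma pwt_cons {α : Type*} (f : α → α → ℝ≥0∞) {n : ℕ} (a : α) (z : Fin (n + 1) → α) :
    pwt f (Fin.cons a z : Fin (n + 2) → α) = f a (z 0) * pwt f z := by
  unfold pwt
  rw [Fin.prod_univ_succ]
  simp only [Fin.castSucc_zero, Fin.cons_zero, ← Fin.succ_castSucc, Fin.cons_succ]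

lemma pn_path (n : ℕ) (u v : V) :
    pn G n u v = ∑' y : Fin (n + 1) → V,
      if y 0 = u ∧ y (Fin.last n) = v then pwt (step G) y else 0 := by
  induction n generalizing u v with
  | zero =>
    rw [← Equiv.tsum_eq (Equiv.funUnique (Fin 1) V).symm]
    have hred : ∀ c : V,
        (if ((Equiv.funUnique (Fin 1) V).symm c) 0 = u ∧
            ((Equiv.funUnique (Fin 1) V).symm c) (Fin.last 0) = v
          then pwt (step G) ((Equiv.funUnique (Fin 1) V).symm c) else 0)
        = if c = u ∧ c = v then 1 else 0 := by
      intro c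
      have h3 : pwt (step G) ((Equiv.funUnique (Fin 1) V).symm c) = 1 := by
        simp [pwt]
      rw [h3]
      rfl
    rw [tsum_congr hred]
    by_cases h : u = v
    · subst h
      rw [tsum_eq_single u (fun b hb => if_neg (by tauto)), if_pos ⟨rfl, rfl⟩, pn_zero,
        if_pos rfl]
    · rw [pn_zero, if_neg h, eq_comm, ENNReal.tsum_eq_zero]
      intro c
      rw [if_neg]
      rintro ⟨rfl, h2⟩
      exact h h2
  | succ n ih =>
    have key : ∀ (a : V) (z : Fin (n + 1) → V),
        (if (Fin.cons a z : Fin (n+2) → V) 0 = u ∧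
            (Fin.cons a z : Fin (n+2) → V) (Fin.last (n+1)) = v
          then pwt (step G) (Fin.cons a z : Fin (n+2) → V) else 0)
        = if a = u then (if z (Fin.last n) = v then step G a (z 0) * pwt (step G) z else 0)
          else 0 := by
      intro a z
      rw [pwt_cons, ← Fin.succ_last, Fin.cons_succ, Fin.cons_zero]
      by_cases h1 : a = u <;> by_cases h2 : z (Fin.last n) = v <;> simp [h1, h2]
    calc pn G (n + 1) u v
        = ∑' w, step G u w * pn G n w v := pn_succ G n u v
      _ = ∑' w, step G u w * ∑' z : Fin (n + 1) → V,
            (if z 0 = w ∧ z (Fin.last n) = v then pwt (step G) z else 0) := by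
          exact tsum_congr fun w => by rw [ih]
      _ = ∑' w, ∑' z : Fin (n + 1) → V,
            (if z 0 = w ∧ z (Fin.last n) = v then step G u w * pwt (step G) z else 0) := by
          refine tsum_congr fun w => ?_
          rw [← ENNReal.tsum_mul_left]
          exact tsum_congr fun z => by by_cases h : z 0 = w ∧ z (Fin.last n) = v <;> simp [h]
      _ = ∑' z : Fin (n + 1) → V, ∑' w,
            (if z 0 = w ∧ z (Fin.last n) = v then step G u w * pwt (step G) z else 0) :=
          ENNReal.tsum_comm
      _ = ∑' z : Fin (n + 1) → V,
            (if z (Fin.last n) = v then step G u (z 0) * pwt (step G) z else 0) := by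
          refine tsum_congr fun z => ?_
          rw [tsum_eq_single (z 0) (fun b hb => by
            rw [if_neg]; rintro ⟨h1, -⟩; exact hb h1.symm)]
          by_cases h2 : z (Fin.last n) = v <;> simp [h2]
      _ = ∑' (a : V), ∑' (z : Fin (n + 1) → V),
            (if (Fin.cons a z : Fin (n+2) → V) 0 = u ∧
                (Fin.cons a z : Fin (n+2) → V) (Fin.last (n+1)) = v
              then pwt (step G) (Fin.cons a z : Fin (n+2) → V) else 0) := by
          symm
          rw [tsum_eq_single u (fun b hb => by
            rw [ENNReal.tsum_eq_zero]
            intro z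
            rw [key b z, if_neg hb])]
          exact tsum_congr fun z => by rw [key u z, if_pos rfl]
      _ = ∑' (p : V × (Fin (n + 1) → V)),
            (if (Fin.cons p.1 p.2 : Fin (n+2) → V) 0 = u ∧
                (Fin.cons p.1 p.2 : Fin (n+2) → V) (Fin.last (n+1)) = v
              then pwt (step G) (Fin.cons p.1 p.2 : Fin (n+2) → V) else 0) :=
          (ENNReal.tsum_prod' (f := fun p : V × (Fin (n + 1) → V) =>
            if (Fin.cons p.1 p.2 : Fin (n+2) → V) 0 = u ∧
                (Fin.cons p.1 p.2 : Fin (n+2) → V) (Fin.last (n+1)) = v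
              then pwt (step G) (Fin.cons p.1 p.2 : Fin (n+2) → V) else 0)).symm
      _ = ∑' y : Fin (n + 2) → V, (if y 0 = u ∧ y (Fin.last (n+1)) = v
            then pwt (step G) y else 0) :=
          Equiv.tsum_eq (Fin.consEquiv (fun _ : Fin (n+2) => V))
            (fun y => if y 0 = u ∧ y (Fin.last (n+1)) = v then pwt (step G) y else 0)

noncomputable def p2 (G : SimpleGraph V) [G.LocallyFinite] (a b : V × V) : ℝ≥0∞ :=
  step G a.1 b.1 * step G a.2 b.2

lemma pair_path (n : ℕ) (a b : V × V) :
    ∑' y : Fin (n + 1) → V × V,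
        (if y 0 = a ∧ y (Fin.last n) = b then pwt (p2 G) y else 0)
      = pn G n a.1 b.1 * pn G n a.2 b.2 := by
  rw [← Equiv.tsum_eq (Equiv.arrowProdEquivProdArrow (Fin (n + 1)) (fun _ => V) (fun _ => V)).symm]
  have key : ∀ p : (Fin (n + 1) → V) × (Fin (n + 1) → V),
      (if ((Equiv.arrowProdEquivProdArrow (Fin (n + 1)) (fun _ => V) (fun _ => V)).symm p) 0 = a ∧
          ((Equiv.arrowProdEquivProdArrow (Fin (n + 1)) (fun _ => V) (fun _ => V)).symm p) (Fin.last n) = b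
        then pwt (p2 G) ((Equiv.arrowProdEquivProdArrow (Fin (n + 1)) (fun _ => V) (fun _ => V)).symm p) else 0)
      = (if p.1 0 = a.1 ∧ p.1 (Fin.last n) = b.1 then pwt (step G) p.1 else 0) *
        (if p.2 0 = a.2 ∧ p.2 (Fin.last n) = b.2 then pwt (step G) p.2 else 0) := by
    rintro ⟨y1, y2⟩
    have hsymm : ∀ i, ((Equiv.arrowProdEquivProdArrow (Fin (n + 1)) (fun _ => V) (fun _ => V)).symm (y1, y2)) i
        = (y1 i, y2 i) := fun i => rfl
    have hpwt : pwt (p2 G) ((Equiv.arrowProdEquivProdArrow (Fin (n + 1)) (fun _ => V) (fun _ => V)).symm (y1, y2))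
        = pwt (step G) y1 * pwt (step G) y2 := by
      unfold pwt p2
      rw [← Finset.prod_mul_distrib]
      rfl
    have hcond : (((Equiv.arrowProdEquivProdArrow (Fin (n + 1)) (fun _ => V) (fun _ => V)).symm (y1, y2)) 0 = a ∧
        ((Equiv.arrowProdEquivProdArrow (Fin (n + 1)) (fun _ => V) (fun _ => V)).symm (y1, y2)) (Fin.last n) = b) ↔
        ((y1 0 = a.1 ∧ y1 (Fin.last n) = b.1) ∧ (y2 0 = a.2 ∧ y2 (Fin.last n) = b.2)) := by
      rw [hsymm 0, hsymm (Fin.last n), Prod.ext_iff, Prod.ext_iff]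
      constructor <;> intro h <;> tauto
    rw [if_congr hcond rfl rfl]
    by_cases h1 : y1 0 = a.1 ∧ y1 (Fin.last n) = b.1 <;>
      by_cases h2 : y2 0 = a.2 ∧ y2 (Fin.last n) = b.2 <;>
      simp [h1, h2, hpwt]
  rw [tsum_congr key]
  calc ∑' p : (Fin (n + 1) → V) × (Fin (n + 1) → V),
        (if p.1 0 = a.1 ∧ p.1 (Fin.last n) = b.1 then pwt (step G) p.1 else 0) *
        (if p.2 0 = a.2 ∧ p.2 (Fin.last n) = b.2 then pwt (step G) p.2 else 0)
      = ∑' y1 : Fin (n + 1) → V, ∑' y2 : Fin (n + 1) → V,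
          (if y1 0 = a.1 ∧ y1 (Fin.last n) = b.1 then pwt (step G) y1 else 0) *
          (if y2 0 = a.2 ∧ y2 (Fin.last n) = b.2 then pwt (step G) y2 else 0) := by
        rw [ENNReal.tsum_prod']
    _ = ∑' y1 : Fin (n + 1) → V,
          (if y1 0 = a.1 ∧ y1 (Fin.last n) = b.1 then pwt (step G) y1 else 0) *
          ∑' y2 : Fin (n + 1) → V,
            (if y2 0 = a.2 ∧ y2 (Fin.last n) = b.2 then pwt (step G) y2 else 0) :=
        tsum_congr fun y1 => ENNReal.tsum_mul_left
    _ = (∑' y1 : Fin (n + 1) → V,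
          (if y1 0 = a.1 ∧ y1 (Fin.last n) = b.1 then pwt (step G) y1 else 0)) *
        (∑' y2 : Fin (n + 1) → V,
          (if y2 0 = a.2 ∧ y2 (Fin.last n) = b.2 then pwt (step G) y2 else 0)) :=
        ENNReal.tsum_mul_right
    _ = pn G n a.1 b.1 * pn G n a.2 b.2 := by rw [← pn_path, ← pn_path]

end PathSums

section Meas

variable [Countable V] [MeasurableSpace V] [DiscreteMeasurableSpace V]
variable (G : SimpleGraph V) [G.LocallyFinite]

/-- extend a finite path to an infinite one -/
def extend {α : Type*} (N : ℕ) (y : Fin (N + 1) → α) : ℕ → α :=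
  fun i => y ⟨min i N, by omega⟩

lemma extend_le {α : Type*} {N : ℕ} (y : Fin (N + 1) → α) {i : ℕ} (h : i ≤ N) :
    extend N y i = y ⟨i, by omega⟩ := by
  simp [extend, Nat.min_eq_left h]

lemma measurableSet_pin (n : ℕ) (b : V × V) :
    MeasurableSet {ω : ℕ → V × V | ω n = b} := by
  have h : {ω : ℕ → V × V | ω n = b} = (fun ω : ℕ → V × V => ω n) ⁻¹' {b} := rfl
  rw [h]
  exact measurable_pi_apply n (measurableSet_singleton b)

lemma measurableSet_coord (n : ℕ) (s : Set (V × V)) :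
    MeasurableSet {ω : ℕ → V × V | ω n ∈ s} := by
  have h : {ω : ℕ → V × V | ω n ∈ s} = (fun ω : ℕ → V × V => ω n) ⁻¹' s := rfl
  rw [h]
  exact measurable_pi_apply n ((Set.to_countable s).measurableSet)

lemma wt_extend {N : ℕ} (y : Fin (N + 1) → V × V) :
    ∏ i ∈ Finset.range N,
        (step G (extend N y i).1 (extend N y (i + 1)).1 *
          step G (extend N y i).2 (extend N y (i + 1)).2)
      = pwt (p2 G) y := by
  rw [pwt, ← Fin.prod_univ_eq_prod_range
    (fun i => step G (extend N y i).1 (extend N y (i + 1)).1 *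
      step G (extend N y i).2 (extend N y (i + 1)).2) N]
  refine Finset.prod_congr rfl fun i _ => ?_
  have h1 : extend N y i.val = y i.castSucc := by
    rw [extend_le y (by omega : i.val ≤ N)]
    congr 1
  have h2 : extend N y (i.val + 1) = y i.succ := by
    rw [extend_le y (by omega : i.val + 1 ≤ N)]
    congr 1
  rw [h1, h2, p2]

/-- the cylinder of depth `N` determined by a finite path -/
def cylC {α : Type*} (N : ℕ) (y : Fin (N + 1) → α) : Set (ℕ → α) :=
  {ω | ∀ i ≤ N, ω i = extend N y i}

/-- the part of the cylinder inside/outside `S` -/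
def cylD {α : Type*} (N : ℕ) (S : Set (ℕ → α)) (y : Fin (N + 1) → α) : Set (ℕ → α) :=
  if extend N y ∈ S then cylC N y else ∅

lemma mem_cylC_self {α : Type*} (N : ℕ) (ω : ℕ → α) :
    ω ∈ cylC N (fun i : Fin (N + 1) => ω i.val) := by
  intro i hi
  rw [extend_le _ hi]

lemma cylC_agree {α : Type*} {N : ℕ} {y : Fin (N + 1) → α} {ω : ℕ → α}
    (h : ω ∈ cylC N y) : ∀ i ≤ N, ω i = extend N y i := h

/-- partition path space into cylinders of depth N -/
lemma part (μ : Measure (ℕ → V × V)) (w : V) (hμ : IsPairWalkMeasure (step G) w w μ)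
    (N : ℕ) (S : Set (ℕ → V × V))
    (hS : ∀ ω ω' : ℕ → V × V, (∀ i ≤ N, ω i = ω' i) → ω ∈ S → ω' ∈ S) :
    μ S = ∑' y : Fin (N + 1) → V × V,
      if extend N y ∈ S then
        (if y 0 = (w, w) then (1 : ℝ≥0∞) else 0) * pwt (p2 G) y
      else 0 := by
  classical
  have hCmeas : ∀ y : Fin (N + 1) → V × V, MeasurableSet (cylC N y) := by
    intro y
    have h : cylC N y = ⋂ (i : ℕ) (_ : i ≤ N), {ω : ℕ → V × V | ω i = extend N y i} := by
      ext ω; simp [cylC, Set.mem_iInter]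
    rw [h]
    exact MeasurableSet.iInter fun i => MeasurableSet.iInter fun _ => measurableSet_pin i _
  have hSD : S = ⋃ y, cylD N S y := by
    ext ω
    constructor
    · intro hω
      refine Set.mem_iUnion.2 ⟨fun i => ω i.val, ?_⟩
      have hext : extend N (fun i : Fin (N + 1) => ω i.val) ∈ S := by
        refine hS ω _ (fun i hi => ?_) hω
        rw [extend_le _ hi]
      rw [cylD, if_pos hext]
      exact mem_cylC_self N ω
    · intro hω
      obtain ⟨y, hy⟩ := Set.mem_iUnion.1 hω
      rw [cylD] at hy
      by_cases hext : extend N y ∈ S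
      · rw [if_pos hext] at hy
        exact hS (extend N y) ω (fun i hi => (cylC_agree hy i hi).symm) hext
      · rw [if_neg hext] at hy
        exact absurd hy (Set.notMem_empty ω)
  have hDsub : ∀ y, cylD N S y ⊆ cylC N y := by
    intro y ω h
    rw [cylD] at h
    by_cases hext : extend N y ∈ S
    · rwa [if_pos hext] at h
    · rw [if_neg hext] at h
      exact absurd h (Set.notMem_empty ω)
  have hdisj : Pairwise (Function.onFun Disjoint (cylD N S)) := by
    intro y y' hne
    refine Set.disjoint_left.2 fun ω h1 h2 => ?_
    have hy := hDsub y h1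
    have hy' := hDsub y' h2
    apply hne
    funext i
    have e1 := cylC_agree hy i.val (by omega)
    have e2 := cylC_agree hy' i.val (by omega)
    rw [extend_le _ (by omega : i.val ≤ N)] at e1 e2
    have e3 : y ⟨i.val, by omega⟩ = y' ⟨i.val, by omega⟩ := by rw [← e1, ← e2]
    simpa [Fin.eta] using e3
  have hDmeas : ∀ y, MeasurableSet (cylD N S y) := by
    intro y
    rw [cylD]
    by_cases h : extend N y ∈ S
    · rw [if_pos h]; exact hCmeas y
    · rw [if_neg h]; exact MeasurableSet.empty
  have hμS : μ S = ∑' y, μ (cylD N S y) := by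
    conv_lhs => rw [hSD]
    exact measure_iUnion hdisj hDmeas
  rw [hμS]
  refine tsum_congr fun y => ?_
  rw [cylD]
  by_cases h : extend N y ∈ S
  · rw [if_pos h, if_pos h]
    have hset : cylC N y = {ω | ∀ i ≤ N, ω i = extend N y i} := rfl
    rw [hset, hμ.2 N (extend N y), extend_le y (Nat.zero_le N), wt_extend]
    have h0 : y ⟨0, by omega⟩ = y 0 := rfl
    rw [h0]
  · rw [if_neg h, if_neg h, measure_empty]

/-- glue a front path and a back tail -/
def glueEquiv (α : Type*) (n k : ℕ) :
    ((Fin (n + 1) → α) × (Fin k → α)) ≃ (Fin (n + k + 1) → α) where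
  toFun p := fun i =>
    if h : i.val ≤ n then p.1 ⟨i.val, by omega⟩ else p.2 ⟨i.val - n - 1, by omega⟩
  invFun y := (fun i => y ⟨i.val, by omega⟩, fun j => y ⟨n + 1 + j.val, by omega⟩)
  left_inv p := by
    obtain ⟨f, g⟩ := p
    refine Prod.ext ?_ ?_ <;> funext i <;> dsimp only
    · rw [dif_pos (by omega : i.val ≤ n)]
    · rw [dif_neg (by omega : ¬ n + 1 + i.val ≤ n)]
      exact congrArg g (Fin.ext (by simp; omega))
  right_inv y := by
    funext i
    dsimp only
    by_cases h : i.val ≤ n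
    · rw [dif_pos h]
    · rw [dif_neg h]
      exact congrArg y (Fin.ext (by simp; omega))

lemma glue_front {α : Type*} {n k : ℕ} (f : Fin (n + 1) → α) (g : Fin k → α)
    (i : ℕ) (hi : i ≤ n) :
    glueEquiv α n k (f, g) ⟨i, by omega⟩ = f ⟨i, by omega⟩ := by
  show (if h : i ≤ n then _ else _) = _
  rw [dif_pos hi]

lemma glue_back {α : Type*} {n k : ℕ} (f : Fin (n + 1) → α) (g : Fin k → α)
    (j : ℕ) (hj : j < k) :
    glueEquiv α n k (f, g) ⟨n + 1 + j, by omega⟩ = g ⟨j, by omega⟩ := by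
  show (if h : n + 1 + j ≤ n then _ else _) = _
  rw [dif_neg (by omega)]
  exact congrArg g (Fin.ext (by simp; omega))

lemma pwt_glue {α : Type*} {n k : ℕ} (h : α → α → ℝ≥0∞)
    (f : Fin (n + 1) → α) (g : Fin k → α) :
    pwt h (glueEquiv α n k (f, g)) =
      pwt h f * pwt h (Fin.cons (f (Fin.last n)) g : Fin (k + 1) → α) := by
  set Y := glueEquiv α n k (f, g) with hY
  rw [pwt, Fin.prod_univ_add (f := fun i : Fin (n + k) => h (Y i.castSucc) (Y i.succ))]
  congr 1
  · rw [pwt]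
    refine Finset.prod_congr rfl fun i _ => ?_
    have e1 : Y (Fin.castAdd k i).castSucc = f i.castSucc := by
      have := glue_front f g i.val (by omega : i.val ≤ n)
      rw [hY]
      convert this using 2
      all_goals exact Fin.ext (by simp)
    have e2 : Y (Fin.castAdd k i).succ = f i.succ := by
      have := glue_front f g (i.val + 1) (by omega : i.val + 1 ≤ n)
      rw [hY]
      convert this using 2
      all_goals exact Fin.ext (by simp)
    rw [e1, e2]
  · rw [pwt]
    refine Finset.prod_congr rfl fun i _ => ?_
    have e2 : Y (Fin.natAdd n i).succ = (Fin.cons (f (Fin.last n)) g : Fin (k + 1) → α) i.succ := by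
      have := glue_back f g i.val i.isLt
      rw [hY, Fin.cons_succ]
      convert this using 2
      exact Fin.ext (by simp [Fin.natAdd]; omega)
    have e1 : Y (Fin.natAdd n i).castSucc
        = (Fin.cons (f (Fin.last n)) g : Fin (k + 1) → α) i.castSucc := by
      by_cases h0 : i.val = 0
      · have hc : i.castSucc = (0 : Fin (k + 1)) := Fin.ext (by simp [h0])
        rw [hc, Fin.cons_zero, hY]
        have := glue_front f g n (le_refl n)
        have hidx : (Fin.natAdd n i).castSucc = (⟨n, by omega⟩ : Fin (n + k + 1)) :=
          Fin.ext (by simp [Fin.natAdd, h0])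
        rw [hidx, this]
        exact congrArg f (Fin.ext rfl)
      · have hc : i.castSucc = (⟨i.val - 1, by omega⟩ : Fin k).succ :=
          Fin.ext (by simp [Fin.succ]; omega)
        rw [hc, Fin.cons_succ, hY]
        have := glue_back f g (i.val - 1) (by omega : i.val - 1 < k)
        have hidx : (Fin.natAdd n i).castSucc = (⟨n + 1 + (i.val - 1), by omega⟩ : Fin (n + k + 1)) :=
          Fin.ext (by simp [Fin.natAdd]; omega)
        rw [hidx, this]
    rw [e1, e2]

lemma consEquiv_pair {k : ℕ} {α : Type*} (a : α) (g : Fin k → α) :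
    (Fin.consEquiv (fun _ : Fin (k + 1) => α)) (a, g) = Fin.cons a g := rfl

/-- the event: pinned at (v,v) at time n, no collision on (n, n+k] -/
def Snk (v : V) (n k : ℕ) : Set (ℕ → V × V) :=
  {ω | ω n = (v, v) ∧ ∀ m, n < m → m ≤ n + k → (ω m).1 ≠ (ω m).2}

/-- the event: no collision on [1, k] -/
def Tk (k : ℕ) : Set (ℕ → V × V) :=
  {ω | ∀ m, 1 ≤ m → m ≤ k → (ω m).1 ≠ (ω m).2}

lemma meas_markov (u v : V) (n k : ℕ)
    (μ : Measure (ℕ → V × V)) (hμ : IsPairWalkMeasure (step G) u u μ)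
    (μv : Measure (ℕ → V × V)) (hμv : IsPairWalkMeasure (step G) v v μv) :
    μ (Snk v n k) = (pn G n u v * pn G n u v) * μv (Tk k) := by
  classical
  -- abbreviations
  set F1 : (Fin (n + 1) → V × V) → ℝ≥0∞ := fun f =>
    if f 0 = (u, u) ∧ f (Fin.last n) = (v, v) then pwt (p2 G) f else 0 with hF1
  set F2 : (Fin k → V × V) → ℝ≥0∞ := fun g =>
    if ∀ j : Fin k, (g j).1 ≠ (g j).2
      then pwt (p2 G) (Fin.cons (v, v) g : Fin (k + 1) → V × V) else 0 with hF2
  -- step A : express μ (Snk v n k) via part at horizon n + k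
  have hdetS : ∀ ω ω' : ℕ → V × V, (∀ i ≤ n + k, ω i = ω' i) → ω ∈ Snk v n k → ω' ∈ Snk v n k := by
    intro ω ω' hag ⟨h1, h2⟩
    refine ⟨(hag n (by omega)) ▸ h1, fun m hm1 hm2 => ?_⟩
    rw [← hag m (by omega)]
    exact h2 m hm1 hm2
  have hA := part G μ u hμ (n + k) (Snk v n k) hdetS
  -- step B : express μv (Tk k) via part at horizon k
  have hdetT : ∀ ω ω' : ℕ → V × V, (∀ i ≤ k, ω i = ω' i) → ω ∈ Tk k → ω' ∈ Tk k := by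
    intro ω ω' hag h m hm1 hm2
    rw [← hag m (by omega)]
    exact h m hm1 hm2
  have hB := part G μv v hμv k (Tk k) hdetT
  -- step D : collapse the start coordinate in the Tk sum
  have hTcons : ∀ (a : V × V) (g : Fin k → V × V),
      (if extend k (Fin.cons a g : Fin (k + 1) → V × V) ∈ Tk k then
        (if (Fin.cons a g : Fin (k + 1) → V × V) 0 = (v, v) then (1 : ℝ≥0∞) else 0) *
          pwt (p2 G) (Fin.cons a g : Fin (k + 1) → V × V)
      else 0)
      = if a = (v, v) then
          (if ∀ j : Fin k, (g j).1 ≠ (g j).2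
            then pwt (p2 G) (Fin.cons a g : Fin (k + 1) → V × V) else 0)
        else 0 := by
    intro a g
    have hcond : (extend k (Fin.cons a g : Fin (k + 1) → V × V) ∈ Tk k)
        ↔ ∀ j : Fin k, (g j).1 ≠ (g j).2 := by
      constructor
      · intro h j
        have hm := h (j.val + 1) (by omega) (by omega)
        rw [extend_le _ (by omega : j.val + 1 ≤ k)] at hm
        have hidx : (⟨j.val + 1, by omega⟩ : Fin (k + 1)) = j.succ := Fin.ext rfl
        rwa [hidx, Fin.cons_succ] at hm
      · intro h m hm1 hm2
        rw [extend_le _ hm2]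
        have hidx : (⟨m, by omega⟩ : Fin (k + 1)) = (⟨m - 1, by omega⟩ : Fin k).succ :=
          Fin.ext (by simp [Fin.succ]; omega)
        rw [hidx, Fin.cons_succ]
        exact h _
    rw [if_congr hcond rfl rfl, Fin.cons_zero]
    by_cases h1 : a = (v, v) <;> by_cases h2 : ∀ j : Fin k, (g j).1 ≠ (g j).2 <;>
      simp [h1, h2]
  have hD : μv (Tk k) = ∑' g : Fin k → V × V, F2 g := by
    rw [hB, ← Equiv.tsum_eq (Fin.consEquiv (fun _ : Fin (k + 1) => V × V)),
      ENNReal.tsum_prod']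
    simp only [consEquiv_pair]
    rw [tsum_eq_single ((v, v) : V × V) (fun a ha => by
      rw [ENNReal.tsum_eq_zero]
      intro g
      exact (hTcons a g).trans (if_neg ha))]
    refine tsum_congr fun g => ?_
    exact (hTcons (v, v) g).trans (if_pos rfl)
  -- step E : factorize the Snk sum
  have hkey : ∀ (f : Fin (n + 1) → V × V) (g : Fin k → V × V),
      (if extend (n + k) (glueEquiv (V × V) n k (f, g)) ∈ Snk v n k then
        (if glueEquiv (V × V) n k (f, g) 0 = (u, u) then (1 : ℝ≥0∞) else 0) *
          pwt (p2 G) (glueEquiv (V × V) n k (f, g))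
      else 0) = F1 f * F2 g := by
    intro f g
    have h0 : glueEquiv (V × V) n k (f, g) 0 = f 0 := by
      have := glue_front f g 0 (by omega)
      have hidx : (⟨0, by omega⟩ : Fin (n + k + 1)) = 0 := Fin.ext rfl
      have hidx2 : (⟨0, by omega⟩ : Fin (n + 1)) = 0 := Fin.ext rfl
      rwa [hidx, hidx2] at this
    have hn : extend (n + k) (glueEquiv (V × V) n k (f, g)) n = f (Fin.last n) := by
      rw [extend_le _ (by omega : n ≤ n + k)]
      have := glue_front f g n (le_refl n)
      rw [this]
      exact congrArg f (Fin.ext rfl)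
    by_cases hlast : f (Fin.last n) = (v, v)
    · have hcond : (extend (n + k) (glueEquiv (V × V) n k (f, g)) ∈ Snk v n k)
          ↔ ∀ j : Fin k, (g j).1 ≠ (g j).2 := by
        constructor
        · intro h j
          have hm := h.2 (n + 1 + j.val) (by omega) (by omega)
          rw [extend_le _ (by omega : n + 1 + j.val ≤ n + k)] at hm
          rw [glue_back f g j.val j.isLt] at hm
          have : (⟨j.val, by omega⟩ : Fin k) = j := Fin.ext rfl
          rwa [this] at hm
        · intro h
          refine ⟨by rw [hn, hlast], fun m hm1 hm2 => ?_⟩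
          rw [extend_le _ (by omega : m ≤ n + k)]
          have hidx : (⟨m, by omega⟩ : Fin (n + k + 1))
              = (⟨n + 1 + (m - n - 1), by omega⟩ : Fin (n + k + 1)) := Fin.ext (by simp; omega)
          rw [hidx, glue_back f g (m - n - 1) (by omega)]
          exact h _
      rw [if_congr hcond rfl rfl, h0, pwt_glue, hlast, hF1, hF2]
      by_cases h1 : f 0 = (u, u) <;> by_cases h2 : ∀ j : Fin k, (g j).1 ≠ (g j).2 <;>
        simp [h1, h2, hlast, mul_comm, mul_assoc, mul_left_comm]
    · rw [if_neg (fun hmem => hlast (by rw [← hn]; exact hmem.1))]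
      have hzero : F1 f = 0 := if_neg (fun hc => hlast hc.2)
      rw [hzero, zero_mul]
  have hE : μ (Snk v n k) = (∑' f : Fin (n + 1) → V × V, F1 f) * (∑' g : Fin k → V × V, F2 g) := by
    rw [hA, ← Equiv.tsum_eq (glueEquiv (V × V) n k), ENNReal.tsum_prod']
    calc ∑' f, ∑' g,
          (if extend (n + k) (glueEquiv (V × V) n k (f, g)) ∈ Snk v n k then
            (if glueEquiv (V × V) n k (f, g) 0 = (u, u) then (1 : ℝ≥0∞) else 0) *
              pwt (p2 G) (glueEquiv (V × V) n k (f, g))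
          else 0)
        = ∑' f, ∑' g, F1 f * F2 g := by
          exact tsum_congr fun f => tsum_congr fun g => hkey f g
      _ = ∑' f, F1 f * ∑' g, F2 g := tsum_congr fun f => ENNReal.tsum_mul_left
      _ = (∑' f, F1 f) * (∑' g, F2 g) := ENNReal.tsum_mul_right
  have hfront : (∑' f : Fin (n + 1) → V × V, F1 f) = pn G n u v * pn G n u v := by
    rw [hF1]
    exact pair_path G n (u, u) (v, v)
  rw [hE, hfront, hD]

lemma measurableSet_Snk (v : V) (n k : ℕ) : MeasurableSet (Snk v n k : Set (ℕ → V × V)) := by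
  have h : (Snk v n k : Set (ℕ → V × V)) = {ω : ℕ → V × V | ω n = (v, v)} ∩
      ⋂ (m : ℕ) (_ : n < m) (_ : m ≤ n + k), {ω : ℕ → V × V | (ω m).1 ≠ (ω m).2} := by
    ext ω
    simp only [Snk, Set.mem_inter_iff, Set.mem_iInter, Set.mem_setOf_eq]
  rw [h]
  exact (measurableSet_pin n _).inter
    (MeasurableSet.iInter fun m => MeasurableSet.iInter fun _ => MeasurableSet.iInter fun _ =>
      measurableSet_coord m {p : V × V | p.1 ≠ p.2})

lemma measurableSet_Tk (k : ℕ) : MeasurableSet (Tk k : Set (ℕ → V × V)) := by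
  have h : (Tk k : Set (ℕ → V × V)) =
      ⋂ (m : ℕ) (_ : 1 ≤ m) (_ : m ≤ k), {ω : ℕ → V × V | (ω m).1 ≠ (ω m).2} := by
    ext ω
    simp only [Tk, Set.mem_iInter, Set.mem_setOf_eq]
  rw [h]
  exact MeasurableSet.iInter fun m => MeasurableSet.iInter fun _ => MeasurableSet.iInter fun _ =>
    measurableSet_coord m {p : V × V | p.1 ≠ p.2}

lemma meas_last (hdeg : ∀ v : V, 0 < G.degree v) (u v : V) (n : ℕ)
    (μ : Measure (ℕ → V × V)) (hμ : IsPairWalkMeasure (step G) u u μ)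
    (μv : Measure (ℕ → V × V)) (hμv : IsPairWalkMeasure (step G) v v μv) :
    μ {ω | ω n = (v, v) ∧ ∀ m, n < m → (ω m).1 ≠ (ω m).2}
      = (pn G n u v * pn G n u v) * μv noCollision := by
  have hSeq : {ω : ℕ → V × V | ω n = (v, v) ∧ ∀ m, n < m → (ω m).1 ≠ (ω m).2}
      = ⋂ k, Snk v n k := by
    ext ω
    constructor
    · rintro ⟨h1, h2⟩
      exact Set.mem_iInter.2 fun k => ⟨h1, fun m hm1 _ => h2 m hm1⟩
    · intro h
      refine ⟨(Set.mem_iInter.1 h 0).1, fun m hm => ?_⟩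
      exact (Set.mem_iInter.1 h (m - n)).2 m hm (by omega)
  have hTeq : (noCollision : Set (ℕ → V × V)) = ⋂ k, Tk k := by
    ext ω
    constructor
    · intro h
      exact Set.mem_iInter.2 fun k m hm1 _ => h m hm1
    · intro h m hm
      exact (Set.mem_iInter.1 h m) m hm (le_refl m)
  have hantiS : Antitone (fun k => (Snk v n k : Set (ℕ → V × V))) := by
    intro k k' hk ω hω
    exact ⟨hω.1, fun m h1 h2 => hω.2 m h1 (by omega)⟩
  have hantiT : Antitone (fun k => (Tk k : Set (ℕ → V × V))) := by
    intro k k' hk ω hω m h1 h2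
    exact hω m h1 (by omega)
  haveI := hμ.1
  haveI := hμv.1
  have h1 := tendsto_measure_iInter_atTop (μ := μ)
    (fun k => (measurableSet_Snk v n k).nullMeasurableSet) hantiS ⟨0, measure_ne_top μ _⟩
  have h2 := tendsto_measure_iInter_atTop (μ := μv)
    (fun k => (measurableSet_Tk k).nullMeasurableSet) hantiT ⟨0, measure_ne_top μv _⟩
  have hcne : (pn G n u v * pn G n u v : ℝ≥0∞) ≠ ⊤ :=
    ((mul_le_one' (pn_le_one G hdeg n u v) (pn_le_one G hdeg n u v)).trans_lt
      ENNReal.one_lt_top).ne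
  have h2' := ENNReal.Tendsto.const_mul (a := pn G n u v * pn G n u v) h2 (Or.inr hcne)
  have heq : (μ ∘ fun k => (Snk v n k : Set (ℕ → V × V)))
      = fun k => (pn G n u v * pn G n u v) * μv (Tk k) :=
    funext fun k => meas_markov G u v n k μ hμ μv hμv
  rw [hSeq, hTeq]
  rw [heq] at h1
  exact tendsto_nhds_unique h1 h2'

lemma inter_full (μ : Measure (ℕ → V × V)) (hp : IsProbabilityMeasure μ)
    {A S : Set (ℕ → V × V)} (hA : MeasurableSet A) (h1 : μ A = 1) : μ (S ∩ A) = μ S := by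
  have hc : μ Aᶜ = 0 := by
    rw [measure_compl hA (by rw [h1]; exact ENNReal.one_ne_top), h1, measure_univ, tsub_self]
  refine le_antisymm (measure_mono Set.inter_subset_left) ?_
  calc μ S = μ (S ∩ A) + μ (S \ A) := (measure_inter_add_diff S hA).symm
    _ ≤ μ (S ∩ A) + μ Aᶜ := add_le_add le_rfl (measure_mono fun ω h => h.2)
    _ = μ (S ∩ A) := by rw [hc, add_zero]

lemma meas_fin (hdeg : ∀ v : V, 0 < G.degree v)
    (μ : V → Measure (ℕ → V × V)) (hμ : ∀ w, IsPairWalkMeasure (step G) w w (μ w)) (u : V) :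
    μ u finCollisions
      = ∑' q : ℕ × V, (pn G q.1 u q.2 * pn G q.1 u q.2) * μ q.2 noCollision := by
  classical
  set E : ℕ × V → Set (ℕ → V × V) := fun q =>
    {ω | ω q.1 = (q.2, q.2) ∧ ∀ m, q.1 < m → (ω m).1 ≠ (ω m).2} with hE
  have hEmeas : ∀ q, MeasurableSet (E q) := by
    intro q
    have h : E q = {ω : ℕ → V × V | ω q.1 = (q.2, q.2)} ∩
        ⋂ (m : ℕ) (_ : q.1 < m), {ω : ℕ → V × V | (ω m).1 ≠ (ω m).2} := by
      ext ω
      simp only [hE, Set.mem_inter_iff, Set.mem_iInter, Set.mem_setOf_eq]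
    rw [h]
    exact (measurableSet_pin q.1 _).inter
      (MeasurableSet.iInter fun m => MeasurableSet.iInter fun _ =>
        measurableSet_coord m {p : V × V | p.1 ≠ p.2})
  have hdisj : Pairwise (Function.onFun Disjoint E) := by
    rintro ⟨n, v⟩ ⟨n', v'⟩ hne
    refine Set.disjoint_left.2 fun ω h1 h2 => ?_
    rcases lt_trichotomy n n' with h | h | h
    · have := h2.1
      exact h1.2 n' h (by rw [this])
    · subst h
      apply hne
      have e1 := h1.1
      have e2 := h2.1
      have : (v, v) = ((v' : V), (v' : V)) := by rw [← e1, ← e2]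
      simp only [Prod.mk.injEq] at this
      rw [this.1]
    · have := h1.1
      exact h2.2 n h (by rw [this])
  have hA1 : μ u {ω : ℕ → V × V | ω 0 = (u, u)} = 1 := by
    have hs : {ω : ℕ → V × V | ω 0 = (u, u)}
        = {ω : ℕ → V × V | ∀ i ≤ 0, ω i = (fun _ => (u, u) : ℕ → V × V) i} := by
      ext ω
      simp only [Set.mem_setOf_eq, Nat.le_zero]
      constructor
      · intro h i hi
        subst hi
        exact h
      · intro h
        exact h 0 rfl
    rw [hs, (hμ u).2 0 (fun _ => (u, u))]
    simp
  have hsub1 : (⋃ q, E q) ⊆ finCollisions := by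
    rintro ω ⟨s, ⟨⟨n, v⟩, rfl⟩, hω⟩
    refine Set.Finite.subset (Set.finite_Iic n) fun m hm => ?_
    by_contra hgt
    simp only [Set.mem_Iic, not_le] at hgt
    exact hω.2 m hgt hm
  have hsub2 : finCollisions ∩ {ω : ℕ → V × V | ω 0 = (u, u)} ⊆ ⋃ q, E q := by
    rintro ω ⟨hfin, h0⟩
    change {n : ℕ | (ω n).1 = (ω n).2}.Finite at hfin
    have hne : (hfin.toFinset : Finset ℕ).Nonempty := by
      refine ⟨0, ?_⟩
      rw [Set.Finite.mem_toFinset]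
      show (ω 0).1 = (ω 0).2
      rw [h0]
    set n := hfin.toFinset.max' hne with hn
    have hnC : (ω n).1 = (ω n).2 := by
      have := hfin.toFinset.max'_mem hne
      rwa [Set.Finite.mem_toFinset] at this
    refine Set.mem_iUnion.2 ⟨(n, (ω n).1), ?_, ?_⟩
    · show ω n = ((ω n).1, (ω n).1)
      exact Prod.ext rfl hnC.symm
    · intro m hm hcoll
      have hmem : m ∈ hfin.toFinset := by
        rw [Set.Finite.mem_toFinset]
        exact hcoll
      exact absurd (hfin.toFinset.le_max' m hmem) (by omega)
  have hprob : IsProbabilityMeasure (μ u) := (hμ u).1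
  have hmeasA : MeasurableSet {ω : ℕ → V × V | ω 0 = (u, u)} := measurableSet_pin 0 _
  have heq1 : μ u finCollisions = μ u (⋃ q, E q) := by
    rw [← inter_full (μ u) hprob hmeasA hA1]
    rw [← inter_full (μ u) hprob hmeasA hA1 (S := ⋃ q, E q)]
    congr 1
    apply Set.Subset.antisymm
    · exact fun ω hω => ⟨hsub2 hω, hω.2⟩
    · exact fun ω hω => ⟨hsub1 hω.1, hω.2⟩
  rw [heq1, measure_iUnion hdisj hEmeas]
  refine tsum_congr fun q => ?_
  exact meas_last G hdeg u q.2 q.1 (μ u) (hμ u) (μ q.2) (hμ q.2)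

theorem mass_transport_total_identity_aux
    (hdeg : ∀ v : V, 0 < G.degree v)
    (μ : V → Measure (ℕ → V × V))
    (hμ : ∀ w : V, IsPairWalkMeasure (step G) w w (μ w)) :
    ∑' u : V, (G.degree u : ℝ≥0∞) * μ u finCollisions
      = ∑' v : V, (G.degree v : ℝ≥0∞) * μ v noCollision * ∑' n : ℕ, pn G (2 * n) v v := by
  classical
  calc ∑' u : V, (G.degree u : ℝ≥0∞) * μ u finCollisions
      = ∑' u : V, ∑' q : ℕ × V, (G.degree u : ℝ≥0∞) *
          ((pn G q.1 u q.2 * pn G q.1 u q.2) * μ q.2 noCollision) := by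
        refine tsum_congr fun u => ?_
        rw [meas_fin G hdeg μ hμ u, ENNReal.tsum_mul_left]
    _ = ∑' q : ℕ × V, ∑' u : V, (G.degree u : ℝ≥0∞) *
          ((pn G q.1 u q.2 * pn G q.1 u q.2) * μ q.2 noCollision) := ENNReal.tsum_comm
    _ = ∑' q : ℕ × V, ((G.degree q.2 : ℝ≥0∞) * μ q.2 noCollision) * pn G (2 * q.1) q.2 q.2 := by
        refine tsum_congr fun q => ?_
        obtain ⟨n, v⟩ := q
        calc ∑' u : V, (G.degree u : ℝ≥0∞) *
              ((pn G n u v * pn G n u v) * μ v noCollision)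
            = ∑' u : V, (((G.degree v : ℝ≥0∞) * pn G n v u) * pn G n u v) * μ v noCollision := by
              refine tsum_congr fun u => ?_
              rw [← mul_assoc, ← mul_assoc, pn_symm G hdeg n u v]
          _ = (∑' u : V, ((G.degree v : ℝ≥0∞) * pn G n v u) * pn G n u v) * μ v noCollision :=
              ENNReal.tsum_mul_right
          _ = ((G.degree v : ℝ≥0∞) * ∑' u : V, pn G n v u * pn G n u v) * μ v noCollision := by
              rw [← ENNReal.tsum_mul_left]
              congr 1
              exact tsum_congr fun w => mul_assoc _ _ _
          _ = ((G.degree v : ℝ≥0∞) * pn G (n + n) v v) * μ v noCollision := by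
              rw [← pn_add G n n v v]
          _ = ((G.degree v : ℝ≥0∞) * μ v noCollision) * pn G (2 * n) v v := by
              rw [two_mul]
              ring
    _ = ∑' n : ℕ, ∑' v : V,
          ((G.degree v : ℝ≥0∞) * μ v noCollision) * pn G (2 * n) v v := ENNReal.tsum_prod'
    _ = ∑' v : V, ∑' n : ℕ,
          ((G.degree v : ℝ≥0∞) * μ v noCollision) * pn G (2 * n) v v := ENNReal.tsum_comm
    _ = ∑' v : V, (G.degree v : ℝ≥0∞) * μ v noCollision * ∑' n : ℕ, pn G (2 * n) v v := by
        exact tsum_congr fun v => ENNReal.tsum_mul_left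

end Meas


/-- `Σ_u deg(u) · q_fin(u) = Σ_v deg(v) · q_0(v) · Σ_{n ≥ 0} p_{2n}(v, v)`
in the extended nonnegative reals. -/
theorem mass_transport_total_identity
    [Countable V] [MeasurableSpace V] [DiscreteMeasurableSpace V]
    (G : SimpleGraph V) [G.LocallyFinite]
    (hconn : G.Connected) (hdeg : ∀ v : V, 0 < G.degree v)
    (μ : V → Measure (ℕ → V × V))
    (hμ : ∀ w : V, IsPairWalkMeasure (step G) w w (μ w)) :
    ∑' u : V, (G.degree u : ℝ≥0∞) * μ u finCollisions
      = ∑' v : V, (G.degree v : ℝ≥0∞) * μ v noCollision * ∑' n : ℕ, pn G (2 * n) v v :=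
  mass_transport_total_identity_aux G hdeg μ hμ
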